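/- Let D = (E,𝓕) be a vf-safe delta-matroid with dual D* := D*E, and let e ∈ E. Then: (1) if e is a non-trivial orientable ribbon loop of D*, then (D*∖e)_min = ((D+e)*∖e)_min; (2) if e is neither a ribbon loop nor a coloop of D*, then (D*/e)_min = ((D+e)*∖e)_min; and (3) if e is a non-trivial non-orientable ribbon loop of D*, then (D*∖e)_min = ((D+e)*/e)_min. Each equality is an equality of set systems on E − {e}. -/
import Mathlib


open scoped symmDiff

structure SetSystem (α : Type) [DecidableEq α] where
  E : Finset α
  F : Finset (Finset α)

namespace SetSystem

variable {α : Type} [DecidableEq α]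

/-- A delta-matroid: nonempty collection of feasible subsets of the ground set
satisfying the symmetric exchange axiom. -/
def IsDeltaMatroid (D : SetSystem α) : Prop :=
  D.F.Nonempty ∧ (∀ F ∈ D.F, F ⊆ D.E) ∧
    ∀ X ∈ D.F, ∀ Y ∈ D.F, ∀ u ∈ X ∆ Y, ∃ v ∈ X ∆ Y, X ∆ ({u, v} : Finset α) ∈ D.F

/-- A matroid, viewed as a delta-matroid whose feasible sets are equicardinal. -/
def IsMatroid (D : SetSystem α) : Prop :=
  D.IsDeltaMatroid ∧ ∀ F₁ ∈ D.F, ∀ F₂ ∈ D.F, F₁.card = F₂.card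

/-- The twist `D*A`. -/
def twist (D : SetSystem α) (A : Finset α) : SetSystem α :=
  ⟨D.E, D.F.image fun F => A ∆ F⟩

/-- The dual `D* := D * E`. -/
def dual (D : SetSystem α) : SetSystem α := D.twist D.E

def IsLoop (D : SetSystem α) (e : α) : Prop := ∀ F ∈ D.F, e ∉ F

def IsColoop (D : SetSystem α) (e : α) : Prop := ∀ F ∈ D.F, e ∈ F

open Classical in
/-- Deletion of a single element (when `e` is a coloop, `D∖e := D/e`). -/
noncomputable def del (D : SetSystem α) (e : α) : SetSystem α :=
  if D.IsColoop e then ⟨D.E.erase e, D.F.image fun F => F.erase e⟩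
  else ⟨D.E.erase e, D.F.filter fun F => e ∉ F⟩

open Classical in
/-- Contraction of a single element (when `e` is a loop, `D/e := D∖e`). -/
noncomputable def con (D : SetSystem α) (e : α) : SetSystem α :=
  if D.IsLoop e then ⟨D.E.erase e, D.F.filter fun F => e ∉ F⟩
  else ⟨D.E.erase e, (D.F.filter fun F => e ∈ F).image fun F => F.erase e⟩

/-- Loop complementation on a single element. -/
def lc (D : SetSystem α) (e : α) : SetSystem α :=
  ⟨D.E, D.F ∆ ((D.F.filter fun F => e ∉ F).image fun F => insert e F)⟩

/-- Loop complementation on a set of elements (applied in some order;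
the operation is order-independent). -/
noncomputable def lcSet (D : SetSystem α) (A : Finset α) : SetSystem α :=
  A.toList.foldl lc D

/-- The dual pivot `D *̄ A := ((D*A)+A)*A`. -/
noncomputable def dpivot (D : SetSystem α) (A : Finset α) : SetSystem α :=
  ((D.twist A).lcSet A).twist A

/-- Set systems reachable from `D` by sequences of twists and loop complementations. -/
inductive Reachable : SetSystem α → SetSystem α → Prop
  | refl (D : SetSystem α) : Reachable D D
  | twist (D D' : SetSystem α) (A : Finset α) (hA : A ⊆ D'.E) :
      Reachable D D' → Reachable D (D'.twist A)
  | lc (D D' : SetSystem α) (A : Finset α) (hA : A ⊆ D'.E) :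
      Reachable D D' → Reachable D (D'.lcSet A)

/-- A vf-safe delta-matroid: any sequence of twists and loop complementations
yields a delta-matroid. -/
def VfSafe (D : SetSystem α) : Prop := ∀ D', Reachable D D' → D'.IsDeltaMatroid

/-- The minimum-cardinality feasible sets. -/
def Fmin (D : SetSystem α) : Finset (Finset α) :=
  D.F.filter fun F => ∀ F' ∈ D.F, F.card ≤ F'.card

/-- The maximum-cardinality feasible sets. -/
def Fmax (D : SetSystem α) : Finset (Finset α) :=
  D.F.filter fun F => ∀ F' ∈ D.F, F'.card ≤ F.card

/-- The lower matroid `D_min`. -/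
def Dmin (D : SetSystem α) : SetSystem α := ⟨D.E, D.Fmin⟩

def IsRibbonLoop (D : SetSystem α) (e : α) : Prop := ∀ F ∈ D.Fmin, e ∉ F

def IsNonorientableRL (D : SetSystem α) (e : α) : Prop :=
  D.IsRibbonLoop e ∧ (D.twist {e}).IsRibbonLoop e

def IsOrientableRL (D : SetSystem α) (e : α) : Prop :=
  D.IsRibbonLoop e ∧ (D.dpivot {e}).IsRibbonLoop e

def IsTrivialOrientableRL (D : SetSystem α) (e : α) : Prop :=
  D.IsOrientableRL e ∧ D.IsLoop e

def IsTrivialNonorientableRL (D : SetSystem α) (e : α) : Prop :=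
  D.IsNonorientableRL e ∧ (D.lc e).IsLoop e



/-! ### Auxiliary lemmas -/

section Aux

lemma mem_twist_iff {D : SetSystem α} {A X : Finset α} :
    X ∈ (D.twist A).F ↔ A ∆ X ∈ D.F := by
  simp only [twist, Finset.mem_image]
  constructor
  · rintro ⟨F, hF, rfl⟩
    rwa [symmDiff_symmDiff_cancel_left]
  · intro h
    exact ⟨A ∆ X, h, symmDiff_symmDiff_cancel_left A X⟩

lemma mem_dual_iff {D : SetSystem α} {X : Finset α} :
    X ∈ D.dual.F ↔ D.E ∆ X ∈ D.F := mem_twist_iff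

lemma mem_lc_of_notMem {D : SetSystem α} {e : α} {X : Finset α} (h : e ∉ X) :
    X ∈ (D.lc e).F ↔ X ∈ D.F := by
  have hd : (D.lc e).F = D.F ∆ ((D.F.filter fun F => e ∉ F).image fun F => insert e F) := rfl
  rw [hd, Finset.mem_symmDiff]
  have himg : X ∉ (D.F.filter fun F => e ∉ F).image fun F => insert e F := by
    simp only [Finset.mem_image, Finset.mem_filter, not_exists]
    intro F hF
    exact h (hF.2 ▸ Finset.mem_insert_self e F)
  tauto

lemma mem_lc_of_mem {D : SetSystem α} {e : α} {X : Finset α} (h : e ∈ X) :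
    X ∈ (D.lc e).F ↔ ¬(X ∈ D.F ↔ X.erase e ∈ D.F) := by
  have hd : (D.lc e).F = D.F ∆ ((D.F.filter fun F => e ∉ F).image fun F => insert e F) := rfl
  rw [hd, Finset.mem_symmDiff]
  have himg : (X ∈ (D.F.filter fun F => e ∉ F).image fun F => insert e F) ↔ X.erase e ∈ D.F := by
    simp only [Finset.mem_image, Finset.mem_filter]
    constructor
    · rintro ⟨F, ⟨hF, heF⟩, rfl⟩
      rwa [Finset.erase_insert heF]
    · intro h1
      exact ⟨X.erase e, ⟨h1, Finset.notMem_erase e X⟩, Finset.insert_erase h⟩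
  rw [himg]
  tauto

lemma mem_lc_insert {D : SetSystem α} {e : α} {X : Finset α} (h : e ∉ X) :
    insert e X ∈ (D.lc e).F ↔ ¬(X ∈ D.F ↔ insert e X ∈ D.F) := by
  rw [mem_lc_of_mem (Finset.mem_insert_self e X), Finset.erase_insert h]
  tauto

lemma lcSet_singleton (D : SetSystem α) (e : α) : D.lcSet {e} = D.lc e := by
  simp [lcSet, Finset.toList_singleton]

lemma singleton_symmDiff_of_mem {e : α} {X : Finset α} (h : e ∈ X) :
    ({e} : Finset α) ∆ X = X.erase e := by
  ext x
  by_cases hx : x = e <;>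
    simp [Finset.mem_symmDiff, Finset.mem_erase, Finset.mem_singleton, hx, h]

lemma singleton_symmDiff_of_notMem {e : α} {X : Finset α} (h : e ∉ X) :
    ({e} : Finset α) ∆ X = insert e X := by
  ext x
  by_cases hx : x = e <;>
    simp [Finset.mem_symmDiff, Finset.mem_insert, Finset.mem_singleton, hx, h]

lemma dpivot_singleton_eq (D : SetSystem α) (e : α) :
    D.dpivot {e} = ((D.twist {e}).lc e).twist {e} := by
  rw [dpivot, lcSet_singleton]

lemma mem_dpivot_of_mem {D : SetSystem α} {e : α} {X : Finset α} (h : e ∈ X) :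
    X ∈ (D.dpivot {e}).F ↔ X ∈ D.F := by
  rw [dpivot_singleton_eq, mem_twist_iff, singleton_symmDiff_of_mem h,
      mem_lc_of_notMem (Finset.notMem_erase e X), mem_twist_iff,
      singleton_symmDiff_of_notMem (Finset.notMem_erase e X), Finset.insert_erase h]

lemma mem_dpivot_of_notMem {D : SetSystem α} {e : α} {X : Finset α} (h : e ∉ X) :
    X ∈ (D.dpivot {e}).F ↔ ¬(X ∈ D.F ↔ insert e X ∈ D.F) := by
  rw [dpivot_singleton_eq, mem_twist_iff, singleton_symmDiff_of_notMem h, mem_lc_insert h]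
  rw [mem_twist_iff, mem_twist_iff, singleton_symmDiff_of_notMem h,
      singleton_symmDiff_of_mem (Finset.mem_insert_self e X), Finset.erase_insert h]
  tauto

lemma notMem_symmDiff_of {A X : Finset α} {e : α} (he : e ∈ A) (hX : e ∈ X) :
    e ∉ A ∆ X := by
  simp [Finset.mem_symmDiff, he, hX]

lemma mem_symmDiff_left_of {A X : Finset α} {e : α} (he : e ∈ A) (hX : e ∉ X) :
    e ∈ A ∆ X := by
  simp [Finset.mem_symmDiff, he, hX]

lemma symmDiff_insert_of_mem_left {A X : Finset α} {e : α} (he : e ∈ A) (hX : e ∉ X) :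
    A ∆ insert e X = (A ∆ X).erase e := by
  ext x
  by_cases hx : x = e <;>
    simp [Finset.mem_symmDiff, Finset.mem_insert, Finset.mem_erase, hx, he, hX] <;> tauto

lemma mem_lcdual_of_mem {D : SetSystem α} {e : α} (he : e ∈ D.E) {X : Finset α} (hX : e ∈ X) :
    X ∈ (D.lc e).dual.F ↔ X ∈ D.dual.F := by
  rw [mem_dual_iff, mem_dual_iff]
  show D.E ∆ X ∈ (D.lc e).F ↔ _
  rw [mem_lc_of_notMem (notMem_symmDiff_of he hX)]

lemma mem_lcdual_of_notMem {D : SetSystem α} {e : α} (he : e ∈ D.E) {X : Finset α}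
    (hX : e ∉ X) :
    X ∈ (D.lc e).dual.F ↔ ¬(X ∈ D.dual.F ↔ insert e X ∈ D.dual.F) := by
  rw [mem_dual_iff, mem_dual_iff, mem_dual_iff]
  show D.E ∆ X ∈ (D.lc e).F ↔ _
  rw [mem_lc_of_mem (mem_symmDiff_left_of he hX), ← symmDiff_insert_of_mem_left he hX]

lemma symmDiff_pair_of_mem_mem {X : Finset α} {u v : α} (hu : u ∈ X) (hv : v ∈ X)
    (huv : u ≠ v) : X ∆ ({u, v} : Finset α) = (X.erase u).erase v := by
  ext x
  by_cases hxu : x = u <;> by_cases hxv : x = v <;>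
    simp [Finset.mem_symmDiff, Finset.mem_insert, Finset.mem_erase, Finset.mem_singleton,
      hxu, hxv, hu, hv, huv] <;> tauto

lemma symmDiff_pair_of_mem_notMem {X : Finset α} {u v : α} (hu : u ∈ X) (hv : v ∉ X)
    (huv : u ≠ v) : X ∆ ({u, v} : Finset α) = insert v (X.erase u) := by
  ext x
  by_cases hxu : x = u <;> by_cases hxv : x = v <;>
    simp [Finset.mem_symmDiff, Finset.mem_insert, Finset.mem_erase, Finset.mem_singleton,
      hxu, hxv, hu, hv, huv] <;> tauto

lemma symmDiff_singleton_right_of_mem {X : Finset α} {u : α} (hu : u ∈ X) :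
    X ∆ ({u} : Finset α) = X.erase u := by
  ext x
  by_cases hxu : x = u <;>
    simp [Finset.mem_symmDiff, Finset.mem_erase, Finset.mem_singleton, hxu, hu]

lemma symmDiff_update {Z W : Finset α} {u v : α} (hu : u ∈ Z) (huW : u ∉ W)
    (hv : v ∈ W) (hvZ : v ∉ Z) :
    (insert v (Z.erase u)) ∆ W = ((Z ∆ W).erase u).erase v := by
  have huv : u ≠ v := fun h => hvZ (h ▸ hu)
  ext x
  by_cases hxu : x = u <;> by_cases hxv : x = v <;>
    simp [Finset.mem_symmDiff, Finset.mem_insert, Finset.mem_erase,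
      hxu, hxv, hu, huW, hv, hvZ, huv] <;> tauto

lemma mem_Fmin_iff {D : SetSystem α} {X : Finset α} :
    X ∈ D.Fmin ↔ X ∈ D.F ∧ ∀ F' ∈ D.F, X.card ≤ F'.card := Finset.mem_filter

lemma Fmin_eq_of (S T : SetSystem α) (k : ℕ)
    (ha : ∀ X ∈ S.F, k ≤ X.card) (hb : ∀ X ∈ T.F, k ≤ X.card)
    (hc : ∃ X ∈ S.F, X.card = k)
    (hd : ∀ X : Finset α, X.card = k → (X ∈ S.F ↔ X ∈ T.F)) :
    S.Fmin = T.Fmin := by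
  obtain ⟨X0, hX0, hX0c⟩ := hc
  have hY0 : X0 ∈ T.F := (hd X0 hX0c).mp hX0
  ext X
  rw [mem_Fmin_iff, mem_Fmin_iff]
  constructor
  · rintro ⟨hX, hmin⟩
    have hXk : X.card = k := le_antisymm (hX0c ▸ hmin X0 hX0) (ha X hX)
    exact ⟨(hd X hXk).mp hX, fun F' hF' => by rw [hXk]; exact hb F' hF'⟩
  · rintro ⟨hX, hmin⟩
    have hXk : X.card = k := le_antisymm (hX0c ▸ hmin X0 hY0) (hb X hX)
    exact ⟨(hd X hXk).mpr hX, fun F' hF' => by rw [hXk]; exact ha F' hF'⟩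

lemma Dmin_eq_of {S T : SetSystem α} (hE : S.E = T.E) (h : S.Fmin = T.Fmin) :
    S.Dmin = T.Dmin := by
  simp only [Dmin]
  rw [hE, h]

lemma del_of_not_coloop {D : SetSystem α} {e : α} (h : ¬ D.IsColoop e) :
    D.del e = ⟨D.E.erase e, D.F.filter fun F => e ∉ F⟩ := by
  unfold del
  rw [if_neg h]

lemma con_of_not_loop {D : SetSystem α} {e : α} (h : ¬ D.IsLoop e) :
    D.con e = ⟨D.E.erase e, (D.F.filter fun F => e ∈ F).image fun F => F.erase e⟩ := by
  unfold con
  rw [if_neg h]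

lemma mem_con_image {F : Finset (Finset α)} {e : α} {X : Finset α} :
    X ∈ (F.filter fun G => e ∈ G).image (fun G => G.erase e) ↔ e ∉ X ∧ insert e X ∈ F := by
  simp only [Finset.mem_image, Finset.mem_filter]
  constructor
  · rintro ⟨G, ⟨hG, heG⟩, rfl⟩
    exact ⟨Finset.notMem_erase e G, by rwa [Finset.insert_erase heG]⟩
  · rintro ⟨hXe, hX⟩
    exact ⟨insert e X, ⟨hX, Finset.mem_insert_self e X⟩, Finset.erase_insert hXe⟩

/-- The exchange-descent argument, used twice (in `𝓓+e` and in `𝓓 ∗̄ {e}`). -/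
lemma descent (M : SetSystem α) (hM : M.IsDeltaMatroid) (e : α) (m : ℕ)
    (S : Finset α → Prop)
    (hS : ∀ Z : Finset α, e ∉ Z → S Z → insert e Z ∈ M.F)
    (hS' : ∀ Z : Finset α, e ∉ Z → insert e Z ∈ M.F → S Z)
    (h0 : ∀ R ∈ M.F, e ∉ R → m ≤ R.card)
    (h1 : ∀ R ∈ M.F, e ∈ R → m + 1 ≤ R.card)
    (W : Finset α) (hWM : W ∈ M.F) (hWe : e ∉ W) (hWc : W.card = m) :
    ∀ n (Z : Finset α), e ∉ Z → Z.card = m → S Z → (Z ∆ W).card ≤ n → S W := by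
  intro n
  induction n with
  | zero =>
    intro Z hZe hZc hSZ hd
    have h1' : Z ∆ W = ∅ := Finset.card_eq_zero.mp (Nat.le_zero.mp hd)
    have hZW : Z = W := by
      rwa [← Finset.bot_eq_empty, symmDiff_eq_bot] at h1'
    exact hZW ▸ hSZ
  | succ n ih =>
    intro Z hZe hZc hSZ hd
    by_cases hZW : Z = W
    · exact hZW ▸ hSZ
    · have hZWne : (Z \ W).Nonempty := by
        rw [Finset.sdiff_nonempty]
        intro hsub
        exact hZW (Finset.eq_of_subset_of_card_le hsub (by omega))
      obtain ⟨u, hu⟩ := hZWne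
      rw [Finset.mem_sdiff] at hu
      obtain ⟨huZ, huW⟩ := hu
      have hue : u ≠ e := fun h => hZe (h ▸ huZ)
      have hXM : insert e Z ∈ M.F := hS Z hZe hSZ
      have huX : u ∈ insert e Z := Finset.mem_insert_of_mem huZ
      have heX : e ∈ insert e Z := Finset.mem_insert_self e Z
      have huXW : u ∈ (insert e Z) ∆ W := by simp [Finset.mem_symmDiff, huX, huW]
      obtain ⟨v, hvXW, hR⟩ := hM.2.2 (insert e Z) hXM W hWM u huXW
      have hXcard : (insert e Z).card = m + 1 := by
        rw [Finset.card_insert_of_notMem hZe, hZc]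
      have hm1 : 0 < m := by
        rw [← hZc]; exact Finset.card_pos.mpr ⟨u, huZ⟩
      by_cases hvu : v = u
      · exfalso
        subst hvu
        have hpair : ({v, v} : Finset α) = {v} :=
          Finset.insert_eq_self.mpr (Finset.mem_singleton_self v)
        rw [hpair, symmDiff_singleton_right_of_mem huX] at hR
        have hc1 : m + 1 ≤ ((insert e Z).erase v).card :=
          h1 _ hR (Finset.mem_erase.mpr ⟨Ne.symm hue, heX⟩)
        have hc2 := Finset.card_erase_of_mem huX
        omega
      by_cases hve : v = e
      · exfalso
        rw [hve, symmDiff_pair_of_mem_mem huX heX hue] at hR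
        have hc1 : m ≤ (((insert e Z).erase u).erase e).card :=
          h0 _ hR (Finset.notMem_erase _ _)
        have hc2 := Finset.card_erase_of_mem huX
        have hc3 := Finset.card_erase_of_mem
          (Finset.mem_erase.mpr ⟨Ne.symm hue, heX⟩ : e ∈ (insert e Z).erase u)
        omega
      by_cases hvX : v ∈ insert e Z
      · exfalso
        rw [symmDiff_pair_of_mem_mem huX hvX (fun h => hvu h.symm)] at hR
        have heR : e ∈ ((insert e Z).erase u).erase v :=
          Finset.mem_erase.mpr ⟨fun h => hve h.symm,
            Finset.mem_erase.mpr ⟨Ne.symm hue, heX⟩⟩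
        have hc1 := h1 _ hR heR
        have hc2 := Finset.card_erase_of_mem huX
        have hc3 := Finset.card_erase_of_mem
          (Finset.mem_erase.mpr ⟨fun h => hvu h, hvX⟩ : v ∈ (insert e Z).erase u)
        omega
      · have hvW : v ∈ W := by
          rcases Finset.mem_symmDiff.mp hvXW with ⟨h1', _⟩ | ⟨h1', _⟩
          · exact absurd h1' hvX
          · exact h1'
        have hvZ : v ∉ Z := fun h => hvX (Finset.mem_insert_of_mem h)
        have hvu' : u ≠ v := fun h => hvu h.symm
        rw [symmDiff_pair_of_mem_notMem huX hvX hvu'] at hR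
        have hXe : (insert e Z).erase u = insert e (Z.erase u) :=
          Finset.erase_insert_of_ne (Ne.symm hue)
        have hRZ' : insert v ((insert e Z).erase u) = insert e (insert v (Z.erase u)) := by
          rw [hXe, Finset.insert_comm]
        rw [hRZ'] at hR
        have hZ'e : e ∉ insert v (Z.erase u) := by
          simp only [Finset.mem_insert, Finset.mem_erase]
          rintro (h | ⟨-, h⟩)
          · exact hve h.symm
          · exact hZe h
        have hSZ' : S (insert v (Z.erase u)) := hS' _ hZ'e hR
        have hZ'c : (insert v (Z.erase u)).card = m := by
          rw [Finset.card_insert_of_notMem (fun h => hvZ (Finset.mem_of_mem_erase h)),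
            Finset.card_erase_of_mem huZ, hZc]
          omega
        have hdist : ((insert v (Z.erase u)) ∆ W).card ≤ n := by
          rw [symmDiff_update huZ huW hvW hvZ]
          have huZW : u ∈ Z ∆ W := by simp [Finset.mem_symmDiff, huZ, huW]
          have hvZW : v ∈ (Z ∆ W).erase u :=
            Finset.mem_erase.mpr ⟨fun h => hvu' h.symm,
              by simp [Finset.mem_symmDiff, hvW, hvZ]⟩
          have hc1 := Finset.card_erase_of_mem hvZW
          have hc2 := Finset.card_erase_of_mem huZW
          omega
        exact ih (insert v (Z.erase u)) hZ'e hZ'c hSZ' hdist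

lemma key_lemma (M : SetSystem α) (e : α)
    (hH : (M.lc e).IsDeltaMatroid) (hK : (M.dpivot {e}).IsDeltaMatroid)
    (m : ℕ)
    (hfree : ∀ F ∈ M.F, e ∉ F → m ≤ F.card)
    (hcont : ∀ F ∈ M.F, e ∈ F → m + 1 ≤ F.card)
    (W : Finset α) (hWF : W ∈ M.F) (hWe : e ∉ W) (hWc : W.card = m)
    (Z : Finset α) (hZF : insert e Z ∈ M.F) (hZe : e ∉ Z) (hZc : Z.card = m)
    (G : Finset α) (hGe : e ∉ G) (hGc : G.card = m) :
    G ∈ M.F ↔ insert e G ∈ M.F := by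
  by_contra hxor
  have hH0 : ∀ R ∈ (M.lc e).F, e ∉ R → m ≤ R.card := fun R hR he' =>
    hfree R ((mem_lc_of_notMem he').mp hR) he'
  have hH1 : ∀ R ∈ (M.lc e).F, e ∈ R → m + 1 ≤ R.card := by
    intro R hR he'
    rw [mem_lc_of_mem he'] at hR
    by_cases h : R ∈ M.F
    · exact hcont R h he'
    · have hRe : R.erase e ∈ M.F := by tauto
      have hc1 := hfree _ hRe (Finset.notMem_erase _ _)
      have hc2 := Finset.card_erase_of_mem he'
      have hc3 : 0 < R.card := Finset.card_pos.mpr ⟨e, he'⟩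
      omega
  have hK1 : ∀ R ∈ (M.dpivot {e}).F, e ∈ R → m + 1 ≤ R.card := fun R hR he' =>
    hcont R ((mem_dpivot_of_mem he').mp hR) he'
  have hK0 : ∀ R ∈ (M.dpivot {e}).F, e ∉ R → m ≤ R.card := by
    intro R hR he'
    rw [mem_dpivot_of_notMem he'] at hR
    by_cases h : R ∈ M.F
    · exact hfree R h he'
    · have hRi : insert e R ∈ M.F := by tauto
      have hc1 := hcont _ hRi (Finset.mem_insert_self e R)
      have hc2 := Finset.card_insert_of_notMem he'
      omega
  have hAW : ¬(W ∈ M.F ↔ insert e W ∈ M.F) :=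
    descent (M.lc e) hH e m (fun Y => ¬(Y ∈ M.F ↔ insert e Y ∈ M.F))
      (fun Y hY hSY => (mem_lc_insert hY).mpr hSY)
      (fun Y hY hmem => (mem_lc_insert hY).mp hmem)
      hH0 hH1 W ((mem_lc_of_notMem hWe).mpr hWF) hWe hWc
      ((G ∆ W).card) G hGe hGc hxor le_rfl
  have hWK : W ∈ (M.dpivot {e}).F := (mem_dpivot_of_notMem hWe).mpr hAW
  have hBW : insert e W ∈ M.F :=
    descent (M.dpivot {e}) hK e m (fun Y => insert e Y ∈ M.F)
      (fun Y hY hSY => (mem_dpivot_of_mem (Finset.mem_insert_self e Y)).mpr hSY)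
      (fun Y hY hmem => (mem_dpivot_of_mem (Finset.mem_insert_self e Y)).mp hmem)
      hK0 hK1 W hWK hWe hWc
      ((Z ∆ W).card) Z hZe hZc hZF le_rfl
  exact hAW (iff_of_true hWF hBW)

end Aux



/-- Lower matroids of minors of `D*` and `(D+e)*`. -/
theorem dual_min_of_minors (D : SetSystem α) (hD : D.VfSafe) (e : α) (he : e ∈ D.E) :
    ((D.dual.IsOrientableRL e ∧ ¬ D.dual.IsLoop e) →
      (D.dual.del e).Dmin = ((D.lc e).dual.del e).Dmin) ∧
    ((¬ D.dual.IsRibbonLoop e ∧ ¬ D.dual.IsColoop e) →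
      (D.dual.con e).Dmin = ((D.lc e).dual.del e).Dmin) ∧
    ((D.dual.IsNonorientableRL e ∧ ¬ (D.dual.lc e).IsLoop e) →
      (D.dual.del e).Dmin = ((D.lc e).dual.con e).Dmin) := by
  classical
  have hdualR : Reachable D D.dual :=
    Reachable.twist D D D.E (Finset.Subset.refl _) (Reachable.refl D)
  have hDM : D.dual.IsDeltaMatroid := hD _ hdualR
  have hH : (D.dual.lc e).IsDeltaMatroid := by
    have h := hD _ (Reachable.lc D D.dual {e} (Finset.singleton_subset_iff.mpr he) hdualR)
    rwa [lcSet_singleton] at h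
  have hK : (D.dual.dpivot {e}).IsDeltaMatroid := by
    have h1 : Reachable D (D.dual.twist {e}) :=
      Reachable.twist D D.dual {e} (Finset.singleton_subset_iff.mpr he) hdualR
    have h2 : Reachable D ((D.dual.twist {e}).lcSet {e}) :=
      Reachable.lc D _ {e} (Finset.singleton_subset_iff.mpr he) h1
    have h3 : Reachable D (((D.dual.twist {e}).lcSet {e}).twist {e}) :=
      Reachable.twist D _ {e}
        (by rw [lcSet_singleton]; exact Finset.singleton_subset_iff.mpr he) h2
    exact hD _ h3
  -- package the construction of a minimal feasible set, given a ribbon loop hypothesis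
  refine ⟨?_, ?_, ?_⟩
  · -- Part 1
    rintro ⟨⟨hRL, hRLK⟩, -⟩
    obtain ⟨W, hWmem, hWmin⟩ := Finset.exists_min_image D.dual.F Finset.card hDM.1
    have hWe : e ∉ W := hRL W (mem_Fmin_iff.mpr ⟨hWmem, hWmin⟩)
    have hcont : ∀ F ∈ D.dual.F, e ∈ F → W.card + 1 ≤ F.card := by
      intro F hF heF
      have h1 : W.card ≤ F.card := hWmin F hF
      by_cases h2 : F.card = W.card
      · exfalso
        have hFm : F ∈ D.dual.Fmin := mem_Fmin_iff.mpr
          ⟨hF, fun F' hF' => by have := hWmin F' hF'; omega⟩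
        exact hRL F hFm heF
      · omega
    -- ¬ coloop of (D.lc e).dual, from RL of the dual pivot
    obtain ⟨M0, hM0, hM0min⟩ :=
      Finset.exists_min_image (D.dual.dpivot {e}).F Finset.card hK.1
    have hM0e : e ∉ M0 := hRLK M0 (mem_Fmin_iff.mpr ⟨hM0, hM0min⟩)
    have hM0' : M0 ∈ (D.lc e).dual.F :=
      (mem_lcdual_of_notMem he hM0e).mpr ((mem_dpivot_of_notMem hM0e).mp hM0)
    have hnc2 : ¬ (D.lc e).dual.IsColoop e := fun h => hM0e (h M0 hM0')
    have hnc : ¬ D.dual.IsColoop e := fun h => hWe (h W hWmem)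
    rw [del_of_not_coloop hnc, del_of_not_coloop hnc2]
    refine Dmin_eq_of rfl ?_
    by_cases hZex : ∃ Z : Finset α, e ∉ Z ∧ Z.card = W.card ∧ insert e Z ∈ D.dual.F
    · exfalso
      obtain ⟨Z, hZe, hZc, hZF⟩ := hZex
      have hkey := key_lemma D.dual e hH hK W.card (fun F hF _ => hWmin F hF) hcont
        W hWmem hWe rfl Z hZF hZe hZc
      have hKmin : ∀ Y ∈ (D.dual.dpivot {e}).F, W.card + 1 ≤ Y.card := by
        intro Y hY
        by_cases heY : e ∈ Y
        · exact hcont _ ((mem_dpivot_of_mem heY).mp hY) heY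
        · have hY' := (mem_dpivot_of_notMem heY).mp hY
          by_cases hYc : Y.card = W.card
          · exact absurd (hkey Y heY hYc) hY'
          · by_cases hmem : Y ∈ D.dual.F
            · have := hWmin Y hmem; omega
            · have hins : insert e Y ∈ D.dual.F := by tauto
              have hc1 := hcont _ hins (Finset.mem_insert_self e Y)
              have hc2 := Finset.card_insert_of_notMem heY
              omega
      have hZK : insert e Z ∈ (D.dual.dpivot {e}).F :=
        (mem_dpivot_of_mem (Finset.mem_insert_self e Z)).mpr hZF
      have hZKm : insert e Z ∈ (D.dual.dpivot {e}).Fmin := mem_Fmin_iff.mpr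
        ⟨hZK, fun F' hF' => by
          have hc1 := hKmin F' hF'
          have hc2 := Finset.card_insert_of_notMem hZe
          omega⟩
      exact hRLK _ hZKm (Finset.mem_insert_self e Z)
    · push_neg at hZex
      apply Fmin_eq_of _ _ W.card
      · intro X hX
        rw [Finset.mem_filter] at hX
        exact hWmin X hX.1
      · intro X hX
        rw [Finset.mem_filter] at hX
        obtain ⟨hX1, hX2⟩ := hX
        rw [mem_lcdual_of_notMem he hX2] at hX1
        by_cases hmem : X ∈ D.dual.F
        · exact hWmin X hmem
        · have hins : insert e X ∈ D.dual.F := by tauto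
          have hc1 := hcont _ hins (Finset.mem_insert_self e X)
          have hc2 := Finset.card_insert_of_notMem hX2
          omega
      · exact ⟨W, Finset.mem_filter.mpr ⟨hWmem, hWe⟩, rfl⟩
      · intro X hXc
        rw [Finset.mem_filter, Finset.mem_filter]
        by_cases hXe : e ∈ X
        · constructor <;> (rintro ⟨-, h⟩; exact absurd hXe h)
        · have hni : insert e X ∉ D.dual.F := hZex X hXe hXc
          rw [mem_lcdual_of_notMem he hXe]
          tauto
  · -- Part 2
    rintro ⟨hnRL, -⟩
    have hX1 : ∃ F ∈ D.dual.Fmin, e ∈ F := by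
      by_contra h
      push_neg at h
      exact hnRL h
    obtain ⟨X1, hX1min, heX1⟩ := hX1
    rw [mem_Fmin_iff] at hX1min
    obtain ⟨hX1F, hX1min⟩ := hX1min
    have hnl : ¬ D.dual.IsLoop e := fun h => (h X1 hX1F) heX1
    have hZ1e : e ∉ X1.erase e := Finset.notMem_erase _ _
    have hiZ1 : insert e (X1.erase e) = X1 := Finset.insert_erase heX1
    have hX1pos : 0 < X1.card := Finset.card_pos.mpr ⟨e, heX1⟩
    have hZ1c : (X1.erase e).card + 1 = X1.card := by
      rw [Finset.card_erase_of_mem heX1]; omega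
    have hZ1' : X1.erase e ∈ (D.lc e).dual.F := by
      rw [mem_lcdual_of_notMem he hZ1e]
      intro hiff
      have hZmem : X1.erase e ∈ D.dual.F := hiff.mpr (hiZ1.symm ▸ hX1F)
      have := hX1min _ hZmem
      omega
    have hnc2 : ¬ (D.lc e).dual.IsColoop e := fun h => hZ1e (h _ hZ1')
    rw [con_of_not_loop hnl, del_of_not_coloop hnc2]
    refine Dmin_eq_of rfl ?_
    apply Fmin_eq_of _ _ (X1.erase e).card
    · intro X hX
      rw [mem_con_image] at hX
      have hc1 := hX1min _ hX.2
      have hc2 := Finset.card_insert_of_notMem hX.1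
      omega
    · intro X hX
      rw [Finset.mem_filter] at hX
      obtain ⟨h1, h2⟩ := hX
      rw [mem_lcdual_of_notMem he h2] at h1
      by_cases hmem : X ∈ D.dual.F
      · have := hX1min _ hmem; omega
      · have hins : insert e X ∈ D.dual.F := by tauto
        have hc1 := hX1min _ hins
        have hc2 := Finset.card_insert_of_notMem h2
        omega
    · exact ⟨X1.erase e, mem_con_image.mpr ⟨hZ1e, hiZ1.symm ▸ hX1F⟩, rfl⟩
    · intro X hXc
      rw [mem_con_image, Finset.mem_filter]
      by_cases hXe : e ∈ X
      · constructor
        · rintro ⟨h, -⟩; exact absurd hXe h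
        · rintro ⟨-, h⟩; exact absurd hXe h
      · rw [mem_lcdual_of_notMem he hXe]
        have hXnF : X ∉ D.dual.F := by
          intro h
          have := hX1min _ h
          omega
        tauto
  · -- Part 3
    rintro ⟨⟨hRL, hRLT⟩, -⟩
    obtain ⟨W, hWmem, hWmin⟩ := Finset.exists_min_image D.dual.F Finset.card hDM.1
    have hWe : e ∉ W := hRL W (mem_Fmin_iff.mpr ⟨hWmem, hWmin⟩)
    have hcont : ∀ F ∈ D.dual.F, e ∈ F → W.card + 1 ≤ F.card := by
      intro F hF heF
      have h1 : W.card ≤ F.card := hWmin F hF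
      by_cases h2 : F.card = W.card
      · exfalso
        have hFm : F ∈ D.dual.Fmin := mem_Fmin_iff.mpr
          ⟨hF, fun F' hF' => by have := hWmin F' hF'; omega⟩
        exact hRL F hFm heF
      · omega
    have hZex : ∃ Z : Finset α, e ∉ Z ∧ Z.card = W.card ∧ insert e Z ∈ D.dual.F := by
      by_contra hno
      push_neg at hno
      have hTmin : ∀ Y ∈ (D.dual.twist {e}).F, W.card + 1 ≤ Y.card := by
        intro Y hY
        rw [mem_twist_iff] at hY
        by_cases heY : e ∈ Y
        · rw [singleton_symmDiff_of_mem heY] at hY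
          have hc1 := hWmin _ hY
          have hc2 := Finset.card_erase_of_mem heY
          have hc3 : 0 < Y.card := Finset.card_pos.mpr ⟨e, heY⟩
          omega
        · rw [singleton_symmDiff_of_notMem heY] at hY
          have hc1 := hcont _ hY (Finset.mem_insert_self e Y)
          have hc2 := Finset.card_insert_of_notMem heY
          by_cases hYc : Y.card = W.card
          · exact absurd hY (hno Y heY hYc)
          · omega
      have hWT : insert e W ∈ (D.dual.twist {e}).F := by
        rw [mem_twist_iff, singleton_symmDiff_of_mem (Finset.mem_insert_self e W),
          Finset.erase_insert hWe]
        exact hWmem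
      have hWTm : insert e W ∈ (D.dual.twist {e}).Fmin := mem_Fmin_iff.mpr
        ⟨hWT, fun F' hF' => by
          have hc1 := hTmin F' hF'
          have hc2 := Finset.card_insert_of_notMem hWe
          omega⟩
      exact hRLT _ hWTm (Finset.mem_insert_self e W)
    obtain ⟨Z, hZe, hZc, hZF⟩ := hZex
    have hkey := key_lemma D.dual e hH hK W.card (fun F hF _ => hWmin F hF) hcont
      W hWmem hWe rfl Z hZF hZe hZc
    have hnc : ¬ D.dual.IsColoop e := fun h => hWe (h W hWmem)
    have hnl' : ¬ (D.lc e).dual.IsLoop e := fun h =>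
      (h (insert e Z)
        ((mem_lcdual_of_mem he (Finset.mem_insert_self e Z)).mpr hZF))
        (Finset.mem_insert_self e Z)
    rw [del_of_not_coloop hnc, con_of_not_loop hnl']
    refine Dmin_eq_of rfl ?_
    apply Fmin_eq_of _ _ W.card
    · intro X hX
      rw [Finset.mem_filter] at hX
      exact hWmin X hX.1
    · intro X hX
      rw [mem_con_image] at hX
      have hX2 : insert e X ∈ D.dual.F :=
        (mem_lcdual_of_mem he (Finset.mem_insert_self e X)).mp hX.2
      have hc1 := hcont _ hX2 (Finset.mem_insert_self e X)
      have hc2 := Finset.card_insert_of_notMem hX.1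
      omega
    · exact ⟨W, Finset.mem_filter.mpr ⟨hWmem, hWe⟩, rfl⟩
    · intro X hXc
      rw [Finset.mem_filter, mem_con_image]
      by_cases hXe : e ∈ X
      · constructor
        · rintro ⟨-, h⟩; exact absurd hXe h
        · rintro ⟨h, -⟩; exact absurd hXe h
      · have hk := hkey X hXe hXc
        rw [mem_lcdual_of_mem he (Finset.mem_insert_self e X)]
        tauto

end SetSystem
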